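/- Let d, K ≥ 1 and let E = ℝ^{d×K} with the Frobenius inner product. Let ψ : E → ℝ be concave and differentiable with γ-Lipschitz gradient for some γ > 0, and let W* be a global maximizer of ψ. Let c > 0, R > 0 and set R₀ = ‖W*‖ + R. On a probability space with a filtration (F_t)_{t≥1}, let W^(1) ∈ E be constant and for each t ≥ 1 let v^(t) : Ω → E be F_t-measurable with ‖v^(t)(ω)‖ = 1 for all ω; set W^(t+1) = W^(t) + η_t v^(t), where η_t = (c/(2γ)) E[‖∇ψ(W^(t))‖]. Assume for every t ≥ 1, almost surely ⟨E[v^(t) | F_{t−1}], ∇ψ(W^(t))⟩ ≥ c‖∇ψ(W^(t))‖, and ‖W^(t)‖ < R. Then for every t > 1: ψ(W*) − E[ψ(W^(t))] ≤ 4γR₀² / (c²(t−1)). -/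

import Mathlib

open MeasureTheory
open scoped RealInnerProductSpace

lemma condexp_euclidean_apply {Ω : Type*} {m m0 : MeasurableSpace Ω} (μ : Measure Ω)
    [IsProbabilityMeasure μ] (hm : m ≤ m0)
    {ι : Type*} [Fintype ι] {f : Ω → EuclideanSpace ℝ ι} (hf : Integrable f μ) (i : ι) :
    (fun ω => (μ[f|m]) ω i) =ᵐ[μ] μ[fun ω => f ω i | m] := by
  haveI : SigmaFinite (μ.trim hm) := by infer_instance
  have hfi : Integrable (fun ω => f ω i) μ := ContinuousLinearMap.integrable_comp (EuclideanSpace.proj i : EuclideanSpace ℝ ι →L[ℝ] ℝ) hf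
  have hci : Integrable (fun ω => (μ[f|m]) ω i) μ :=
    ContinuousLinearMap.integrable_comp (EuclideanSpace.proj i : EuclideanSpace ℝ ι →L[ℝ] ℝ) integrable_condExp
  refine ae_eq_condExp_of_forall_setIntegral_eq hm hfi (fun s _ _ => hci.integrableOn)
    (fun s hs hμs => ?_) ?_
  · have h1 : ∫ ω in s, (μ[f|m]) ω i ∂μ = (EuclideanSpace.proj i) (∫ ω in s, (μ[f|m]) ω ∂μ) :=
      ContinuousLinearMap.integral_comp_comm (EuclideanSpace.proj i : EuclideanSpace ℝ ι →L[ℝ] ℝ) integrable_condExp.integrableOn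
    have h2 : ∫ ω in s, f ω i ∂μ = (EuclideanSpace.proj i) (∫ ω in s, f ω ∂μ) :=
      ContinuousLinearMap.integral_comp_comm (EuclideanSpace.proj i : EuclideanSpace ℝ ι →L[ℝ] ℝ) hf.integrableOn
    rw [h1, h2, setIntegral_condExp hm hf hs]
  · exact StronglyMeasurable.aestronglyMeasurable
      ((EuclideanSpace.proj i : EuclideanSpace ℝ ι →L[ℝ] ℝ).continuous.comp_stronglyMeasurable stronglyMeasurable_condExp)

lemma euclid_abs_coord_le {ι : Type*} [Fintype ι] (x : EuclideanSpace ℝ ι) (i : ι) :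
    |x i| ≤ ‖x‖ := by
  rw [EuclideanSpace.norm_eq]
  calc |x i| = Real.sqrt (‖x i‖ ^ 2) := by
        rw [Real.norm_eq_abs, Real.sqrt_sq (abs_nonneg _)]
    _ ≤ Real.sqrt (∑ j, ‖x j‖ ^ 2) := Real.sqrt_le_sqrt
        (Finset.single_le_sum (fun j _ => sq_nonneg ‖x j‖) (Finset.mem_univ i))

lemma integral_inner_condexp {Ω : Type*} {m m0 : MeasurableSpace Ω} (μ : Measure Ω)
    [IsProbabilityMeasure μ] (hm : m ≤ m0)
    {ι : Type*} [Fintype ι] {Y f : Ω → EuclideanSpace ℝ ι}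
    (hY : StronglyMeasurable[m] Y) {CY : ℝ} (hYb : ∀ ω, ‖Y ω‖ ≤ CY)
    (hf : AEStronglyMeasurable f μ) {Cf : ℝ} (hfb : ∀ ω, ‖f ω‖ ≤ Cf) :
    ∫ ω, ⟪Y ω, (μ[f|m]) ω⟫ ∂μ = ∫ ω, ⟪Y ω, f ω⟫ ∂μ := by
  haveI : SigmaFinite (μ.trim hm) := by infer_instance
  have hfi : Integrable f μ :=
    Integrable.mono' (integrable_const Cf) hf (Filter.Eventually.of_forall hfb)
  have hYm0 : AEStronglyMeasurable Y μ := (hY.mono hm).aestronglyMeasurable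
  have hYi : ∀ i : ι, StronglyMeasurable[m] fun ω => Y ω i := fun i =>
    (EuclideanSpace.proj i : EuclideanSpace ℝ ι →L[ℝ] ℝ).continuous.comp_stronglyMeasurable hY
  have hfii : ∀ i : ι, Integrable (fun ω => f ω i) μ := fun i =>
    ContinuousLinearMap.integrable_comp (EuclideanSpace.proj i : EuclideanSpace ℝ ι →L[ℝ] ℝ) hfi
  have hci : Integrable (μ[f|m]) μ := integrable_condExp
  have hcii : ∀ i : ι, Integrable (fun ω => (μ[f|m]) ω i) μ := fun i =>
    ContinuousLinearMap.integrable_comp (EuclideanSpace.proj i : EuclideanSpace ℝ ι →L[ℝ] ℝ) hci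
  have hYbd : ∀ i : ι, ∃ C, ∀ ω, ‖Y ω i‖ ≤ C := fun i =>
    ⟨CY, fun ω => le_trans (by simpa using euclid_abs_coord_le (Y ω) i) (hYb ω)⟩
  have key : ∀ i : ι, ∫ ω, Y ω i * (μ[f|m]) ω i ∂μ = ∫ ω, Y ω i * f ω i ∂μ := by
    intro i
    have h1 : ∫ ω, Y ω i * (μ[f|m]) ω i ∂μ = ∫ ω, Y ω i * (μ[fun ω => f ω i|m]) ω ∂μ := by
      refine integral_congr_ae ?_
      filter_upwards [condexp_euclidean_apply μ hm hfi i] with ω hω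
      rw [hω]
    have h2 : (fun ω => Y ω i * (μ[fun ω => f ω i|m]) ω) =ᵐ[μ]
        μ[(fun ω => Y ω i * f ω i)|m] := by
      have := condExp_mul_of_stronglyMeasurable_left (hYi i)
        (Integrable.bdd_mul (hfii i) ((hYi i).mono hm).aestronglyMeasurable (Filter.Eventually.of_forall (hYbd i).choose_spec)) (hfii i)
      exact (this.symm)
    rw [h1, integral_congr_ae h2, integral_condExp hm]
  have expand : ∀ (a b : EuclideanSpace ℝ ι), ⟪a, b⟫ = ∑ i, a i * b i := by
    intro a b
    simp [PiLp.inner_apply, RCLike.inner_apply, conj_trivial]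
    exact Finset.sum_congr rfl fun i _ => mul_comm _ _
  calc ∫ ω, ⟪Y ω, (μ[f|m]) ω⟫ ∂μ = ∫ ω, ∑ i, Y ω i * (μ[f|m]) ω i ∂μ := by
        simp_rw [expand]
    _ = ∑ i, ∫ ω, Y ω i * (μ[f|m]) ω i ∂μ := integral_finset_sum _ (fun i _ =>
        Integrable.bdd_mul (hcii i) ((hYi i).mono hm).aestronglyMeasurable (Filter.Eventually.of_forall (hYbd i).choose_spec))
    _ = ∑ i, ∫ ω, Y ω i * f ω i ∂μ := by simp_rw [key]
    _ = ∫ ω, ∑ i, Y ω i * f ω i ∂μ := (integral_finset_sum _ (fun i _ =>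
        Integrable.bdd_mul (hfii i) ((hYi i).mono hm).aestronglyMeasurable (Filter.Eventually.of_forall (hYbd i).choose_spec))).symm
    _ = ∫ ω, ⟪Y ω, f ω⟫ ∂μ := by simp_rw [expand]

section Analysis
variable {E : Type*} [NormedAddCommGroup E] [InnerProductSpace ℝ E] [CompleteSpace E]

lemma smooth_descent {ψ : E → ℝ} {g : E → E} {γ : ℝ} (hγ : 0 ≤ γ)
    (hgrad : ∀ x, HasGradientAt ψ (g x) x)
    (hlip : ∀ x y, ‖g x - g y‖ ≤ γ * ‖x - y‖) (x y : E) :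
    |ψ y - ψ x - ⟪g x, y - x⟫| ≤ γ * ‖y - x‖ ^ 2 := by
  have seg_bound : ∀ z ∈ segment ℝ x y, ‖z - x‖ ≤ ‖y - x‖ := by
    rintro z ⟨a, b, ha, hb, hab, rfl⟩
    have : a • x + b • y - x = b • (y - x) := by
      rw [smul_sub]
      have : a = 1 - b := by linarith
      rw [this]; module
    rw [this, norm_smul]
    simp only [Real.norm_eq_abs, abs_of_nonneg hb]
    nlinarith [norm_nonneg (y - x)]
  have key := Convex.norm_image_sub_le_of_norm_hasFDerivWithin_le'
    (f := ψ) (f' := fun z => (InnerProductSpace.toDual ℝ E) (g z))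
    (φ := (InnerProductSpace.toDual ℝ E) (g x)) (s := segment ℝ x y)
    (C := γ * ‖y - x‖)
    (fun z _ => ((hgrad z).hasFDerivAt).hasFDerivWithinAt)
    (fun z hz => by
      have h1 : ‖(InnerProductSpace.toDual ℝ E) (g z) - (InnerProductSpace.toDual ℝ E) (g x)‖
          = ‖g z - g x‖ := by
        rw [← dist_eq_norm, ← dist_eq_norm]
        exact LinearIsometryEquiv.dist_map _ _ _
      rw [h1]
      calc ‖g z - g x‖ ≤ γ * ‖z - x‖ := hlip z x
        _ ≤ γ * ‖y - x‖ := by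
            have := seg_bound z hz
            nlinarith)
    (convex_segment x y) (left_mem_segment ℝ x y) (right_mem_segment ℝ x y)
  have : (InnerProductSpace.toDual ℝ E) (g x) (y - x) = ⟪g x, y - x⟫ := rfl
  rw [this] at key
  calc |ψ y - ψ x - ⟪g x, y - x⟫| ≤ γ * ‖y - x‖ * ‖y - x‖ := key
    _ = γ * ‖y - x‖ ^ 2 := by ring

lemma concave_grad_ineq {ψ : E → ℝ} {g : E → E} {γ : ℝ} (hγ : 0 ≤ γ)
    (hconc : ConcaveOn ℝ Set.univ ψ)
    (hgrad : ∀ x, HasGradientAt ψ (g x) x)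
    (hlip : ∀ x y, ‖g x - g y‖ ≤ γ * ‖x - y‖) (x z : E) :
    ψ z - ψ x ≤ ⟪g x, z - x⟫ := by
  refine le_of_forall_pos_le_add (fun ε hε => ?_)
  set u := z - x with hu
  set s : ℝ := min 1 (ε / (γ * ‖u‖ ^ 2 + 1)) with hs
  have hd : 0 < γ * ‖u‖ ^ 2 + 1 := by positivity
  have hs0 : 0 < s := lt_min one_pos (div_pos hε hd)
  have hs1 : s ≤ 1 := min_le_left _ _
  have hconc' : (1 - s) * ψ x + s * ψ z ≤ ψ (x + s • u) := by
    have h := hconc.2 (Set.mem_univ x) (Set.mem_univ z)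
      (by linarith : (0:ℝ) ≤ 1 - s) (le_of_lt hs0) (by ring)
    have hpt : (1 - s) • x + s • z = x + s • u := by
      rw [hu]; module
    rw [hpt] at h
    simpa using h
  have hdesc := smooth_descent hγ hgrad hlip x (x + s • u)
  have hy : x + s • u - x = s • u := by abel
  rw [hy] at hdesc
  have hinner : ⟪g x, s • u⟫ = s * ⟪g x, u⟫ := real_inner_smul_right _ _ _
  have hnorm : ‖s • u‖ ^ 2 = s ^ 2 * ‖u‖ ^ 2 := by
    rw [norm_smul]
    simp [Real.norm_eq_abs, mul_pow, sq_abs]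
  have hupper : ψ (x + s • u) - ψ x ≤ s * ⟪g x, u⟫ + γ * (s ^ 2 * ‖u‖ ^ 2) := by
    have := (abs_le.mp hdesc).2
    rw [hinner, hnorm] at this
    linarith
  have hstep : s * (ψ z - ψ x) ≤ s * ⟪g x, u⟫ + γ * (s ^ 2 * ‖u‖ ^ 2) := by
    nlinarith [hconc']
  have hdiv : ψ z - ψ x ≤ ⟪g x, u⟫ + γ * s * ‖u‖ ^ 2 := by
    have := (div_le_div_iff_of_pos_right hs0).mpr hstep
    nlinarith [hstep, hs0]
  have hsmall : γ * s * ‖u‖ ^ 2 ≤ ε := by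
    have h1 : s ≤ ε / (γ * ‖u‖ ^ 2 + 1) := min_le_right _ _
    have h2 : s * (γ * ‖u‖ ^ 2 + 1) ≤ ε := by
      rw [← le_div_iff₀ hd]; exact h1
    nlinarith [hs0.le, mul_nonneg (mul_nonneg hγ hs0.le) (sq_nonneg ‖u‖)]
  linarith

end Analysis

lemma selmix_rec_ineq (α : ℝ) (hα : 0 < α) (δ : ℕ → ℝ)
    (hnn : ∀ t, 1 ≤ t → 0 ≤ δ t)
    (hstep : ∀ t, 1 ≤ t → δ (t + 1) ≤ δ t - α * δ t ^ 2) :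
    ∀ t : ℕ, 1 ≤ t → α * ((t : ℝ) - 1) * δ t ≤ 1 := by
  intro t ht
  induction t, ht using Nat.le_induction with
  | base => simp
  | succ n hn ih =>
    have h1 : 0 ≤ δ (n + 1) := hnn _ (by omega)
    have h2 := hstep n hn
    have h0 : 0 ≤ δ n := hnn n hn
    have hn1 : (1 : ℝ) ≤ (n : ℝ) := by exact_mod_cast hn
    set x : ℝ := α * δ n with hx
    have hx0 : 0 ≤ x := mul_nonneg hα.le h0
    have hxx : x ^ 2 ≤ x := by nlinarith
    have hx1 : x ≤ 1 := by nlinarith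
    have hcast : ((n + 1 : ℕ) : ℝ) - 1 = (n : ℝ) := by push_cast; ring
    rw [hcast]
    have key : α * (n : ℝ) * δ (n + 1) ≤ (n : ℝ) * (x - x ^ 2) := by
      have hna : 0 ≤ α * (n : ℝ) := by positivity
      calc α * (n : ℝ) * δ (n + 1) ≤ α * (n : ℝ) * (δ n - α * δ n ^ 2) := by
            have := mul_le_mul_of_nonneg_left h2 hna; linarith
        _ = (n : ℝ) * (x - x ^ 2) := by rw [hx]; ring
    have ihx : α * ((n : ℝ) - 1) * δ n = ((n : ℝ) - 1) * x := by rw [hx]; ring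
    have ih' : ((n : ℝ) - 1) * x ≤ 1 := by rw [← ihx]; exact ih
    nlinarith [mul_nonneg (sub_nonneg.2 ih') (sub_nonneg.2 hx1), sq_nonneg x]

/-- Convergence of the SelMix stochastic update (Theorem C.1 / Theorem 3.2 of the SelMix
paper). Here `E = ℝ^{d×K}` with the Frobenius inner product is realized as
`EuclideanSpace ℝ (Fin d × Fin K)`, `ψ` is concave and differentiable with `γ`-Lipschitz
gradient `g`, `Wstar` is a global maximizer, and the iterates satisfy
`W^(t+1) = W^(t) + η_t v^(t)` with unit-norm `ℱ t`-measurable directions `v^(t)`,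
step sizes `η_t = (c/(2γ)) E[‖g(W^(t))‖]`, alignment
`⟪E[v^(t) | ℱ (t-1)], g(W^(t))⟫ ≥ c ‖g(W^(t))‖` a.s., and boundedness `‖W^(t)‖ < R` a.s.
Then for `t > 1`, `ψ(Wstar) - E[ψ(W^(t))] ≤ 4 γ R₀² / (c² (t-1))` with `R₀ = ‖Wstar‖ + R`. -/
theorem selmix_convergence
    (d K : ℕ) (hd : 1 ≤ d) (hK : 1 ≤ K)
    {Ω : Type*} [m0 : MeasurableSpace Ω] (μ : Measure Ω) [IsProbabilityMeasure μ]
    (ℱ : Filtration ℕ m0)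
    (ψ : EuclideanSpace ℝ (Fin d × Fin K) → ℝ)
    (g : EuclideanSpace ℝ (Fin d × Fin K) → EuclideanSpace ℝ (Fin d × Fin K))
    (γ c R : ℝ) (hγ : 0 < γ) (hc : 0 < c) (hR : 0 < R)
    (hconc : ConcaveOn ℝ Set.univ ψ)
    (hgrad : ∀ x, HasGradientAt ψ (g x) x)
    (hlip : ∀ x y, ‖g x - g y‖ ≤ γ * ‖x - y‖)
    (Wstar : EuclideanSpace ℝ (Fin d × Fin K))
    (hmax : ∀ x, ψ x ≤ ψ Wstar)
    (R₀ : ℝ) (hR₀ : R₀ = ‖Wstar‖ + R)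
    (W v : ℕ → Ω → EuclideanSpace ℝ (Fin d × Fin K)) (η : ℕ → ℝ)
    (hW1 : ∃ w₀, ∀ ω, W 1 ω = w₀)
    (hvmeas : ∀ t, 1 ≤ t → StronglyMeasurable[ℱ t] (v t))
    (hvnorm : ∀ t, 1 ≤ t → ∀ ω, ‖v t ω‖ = 1)
    (hη : ∀ t, 1 ≤ t → η t = c / (2 * γ) * ∫ ω, ‖g (W t ω)‖ ∂μ)
    (hWrec : ∀ t, 1 ≤ t → ∀ ω, W (t + 1) ω = W t ω + η t • v t ω)
    (halign : ∀ t, 1 ≤ t →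
      ∀ᵐ ω ∂μ, c * ‖g (W t ω)‖ ≤ ⟪(μ[v t | ℱ (t - 1)]) ω, g (W t ω)⟫)
    (hbound : ∀ t, 1 ≤ t → ∀ᵐ ω ∂μ, ‖W t ω‖ < R) :
    ∀ t : ℕ, 1 < t →
      ψ Wstar - ∫ ω, ψ (W t ω) ∂μ ≤ 4 * γ * R₀ ^ 2 / (c ^ 2 * ((t : ℝ) - 1)) := by
  have hγ' : (0:ℝ) ≤ γ := hγ.le
  have hR₀pos : 0 < R₀ := by rw [hR₀]; positivity
  -- continuity
  have hψc : Continuous ψ := continuous_iff_continuousAt.mpr fun x =>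
    ((hgrad x).hasFDerivAt).continuousAt
  have hgc : Continuous g := by
    have hlw : LipschitzWith (Real.toNNReal γ) g := by
      apply LipschitzWith.of_dist_le_mul
      intro a b
      rw [dist_eq_norm, dist_eq_norm, Real.coe_toNNReal γ hγ']
      exact hlip a b
    exact hlw.continuous
  -- strong measurability of the iterates
  have hWm : ∀ t, 1 ≤ t → StronglyMeasurable[ℱ (t - 1)] (W t) := by
    intro t ht
    induction t, ht using Nat.le_induction with
    | base =>
      obtain ⟨w₀, hw⟩ := hW1
      have : W 1 = fun _ => w₀ := funext hw
      rw [this]; exact stronglyMeasurable_const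
    | succ n hn ih =>
      have hre : W (n + 1) = fun ω => W n ω + η n • v n ω := funext (hWrec n hn)
      rw [hre]
      show StronglyMeasurable[ℱ n] (fun ω => W n ω + η n • v n ω)
      exact ((ih.mono (ℱ.mono (Nat.sub_le n 1))).add ((hvmeas n hn).const_smul (η n)))
  have hWam : ∀ t, 1 ≤ t → AEStronglyMeasurable (W t) μ := fun t ht =>
    ((hWm t ht).mono (ℱ.le _)).aestronglyMeasurable
  -- uniform (deterministic) bounds on the iterates
  have hWb : ∀ t, 1 ≤ t → ∃ M : ℝ, 0 ≤ M ∧ ∀ ω, ‖W t ω‖ ≤ M := by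
    intro t ht
    induction t, ht using Nat.le_induction with
    | base =>
      obtain ⟨w₀, hw⟩ := hW1
      exact ⟨‖w₀‖, norm_nonneg _, fun ω => by rw [hw ω]⟩
    | succ n hn ih =>
      obtain ⟨M, hM0, hM⟩ := ih
      refine ⟨M + |η n|, by positivity, fun ω => ?_⟩
      rw [hWrec n hn ω]
      calc ‖W n ω + η n • v n ω‖ ≤ ‖W n ω‖ + ‖η n • v n ω‖ := norm_add_le _ _
        _ = ‖W n ω‖ + |η n| := by rw [norm_smul, hvnorm n hn ω, Real.norm_eq_abs, mul_one]
        _ ≤ M + |η n| := by linarith [hM ω]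
  -- bound on the gradient along the iterates
  have hgb : ∀ z, ‖g z‖ ≤ ‖g 0‖ + γ * ‖z‖ := by
    intro z
    have h1 := hlip z 0
    rw [sub_zero] at h1
    have h2 := norm_sub_norm_le (g z) (g 0)
    linarith
  have hgWb : ∀ t, 1 ≤ t → ∃ C : ℝ, 0 ≤ C ∧ ∀ ω, ‖g (W t ω)‖ ≤ C := by
    intro t ht
    obtain ⟨M, hM0, hM⟩ := hWb t ht
    refine ⟨‖g 0‖ + γ * M, by positivity, fun ω => ?_⟩
    have := hgb (W t ω)
    have h2 : γ * ‖W t ω‖ ≤ γ * M := by nlinarith [hM ω]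
    linarith
  -- integrability
  have hgW_meas : ∀ t, 1 ≤ t → AEStronglyMeasurable (fun ω => g (W t ω)) μ := fun t ht =>
    hgc.comp_aestronglyMeasurable (hWam t ht)
  have hgW_int : ∀ t, 1 ≤ t → Integrable (fun ω => g (W t ω)) μ := by
    intro t ht
    obtain ⟨C, hC0, hC⟩ := hgWb t ht
    exact Integrable.mono' (integrable_const C) (hgW_meas t ht) (Filter.Eventually.of_forall hC)
  have hgnorm_int : ∀ t, 1 ≤ t → Integrable (fun ω => ‖g (W t ω)‖) μ := fun t ht =>
    (hgW_int t ht).norm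
  have hψW_int : ∀ t, 1 ≤ t → Integrable (fun ω => ψ (W t ω)) μ := by
    intro t ht
    obtain ⟨M, hM0, hM⟩ := hWb t ht
    obtain ⟨C, hC⟩ := (isCompact_closedBall (0 : EuclideanSpace ℝ (Fin d × Fin K))
      M).exists_bound_of_continuousOn hψc.continuousOn
    refine Integrable.mono' (integrable_const C)
      (hψc.comp_aestronglyMeasurable (hWam t ht)) (Filter.Eventually.of_forall fun ω => ?_)
    exact hC (W t ω) (mem_closedBall_zero_iff.mpr (hM ω))
  -- key quantities (introduced as opaque constants to keep `linarith` happy)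
  obtain ⟨G, hG⟩ : ∃ G : ℕ → ℝ, ∀ t, G t = ∫ ω, ‖g (W t ω)‖ ∂μ :=
    ⟨fun t => ∫ ω, ‖g (W t ω)‖ ∂μ, fun _ => rfl⟩
  obtain ⟨δ, hδ⟩ : ∃ δ : ℕ → ℝ, ∀ t, δ t = ψ Wstar - ∫ ω, ψ (W t ω) ∂μ :=
    ⟨fun t => ψ Wstar - ∫ ω, ψ (W t ω) ∂μ, fun _ => rfl⟩
  have hGnn : ∀ t, 0 ≤ G t := fun t => by
    rw [hG]; exact integral_nonneg fun ω => norm_nonneg _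
  have hηnn : ∀ t, 1 ≤ t → 0 ≤ η t := by
    intro t ht
    rw [hη t ht, ← hG]
    have : 0 ≤ c / (2 * γ) := by positivity
    exact mul_nonneg this (hGnn t)
  -- δ is nonnegative
  have hδnn : ∀ t, 1 ≤ t → 0 ≤ δ t := by
    intro t ht
    have h1 : ∫ ω, ψ (W t ω) ∂μ ≤ ∫ _ω, ψ Wstar ∂μ :=
      integral_mono (hψW_int t ht) (integrable_const _) fun ω => hmax _
    simp only [integral_const, probReal_univ, one_smul] at h1
    rw [hδ]
    linarith
  -- δ t ≤ R₀ * G t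
  have hδle : ∀ t, 1 ≤ t → δ t ≤ R₀ * G t := by
    intro t ht
    have hae : ∀ᵐ ω ∂μ, ψ Wstar - ψ (W t ω) ≤ R₀ * ‖g (W t ω)‖ := by
      filter_upwards [hbound t ht] with ω hω
      have h1 := concave_grad_ineq hγ' hconc hgrad hlip (W t ω) Wstar
      have h2 := real_inner_le_norm (g (W t ω)) (Wstar - W t ω)
      have h3 : ‖Wstar - W t ω‖ ≤ R₀ := by
        have := norm_sub_le Wstar (W t ω)
        rw [hR₀]; linarith
      nlinarith [norm_nonneg (g (W t ω))]
    have hsub : Integrable (fun ω => ψ Wstar - ψ (W t ω)) μ :=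
      (integrable_const (ψ Wstar)).sub (hψW_int t ht)
    have h4 : ∫ ω, (ψ Wstar - ψ (W t ω)) ∂μ ≤ ∫ ω, R₀ * ‖g (W t ω)‖ ∂μ :=
      integral_mono_ae hsub ((hgnorm_int t ht).const_mul R₀) hae
    rw [integral_sub (integrable_const _) (hψW_int t ht), integral_const_mul,
      integral_const, probReal_univ, one_smul] at h4
    rw [hδ, hG]
    exact h4
  -- the one-step descent inequality
  have hstep : ∀ t, 1 ≤ t → δ (t + 1) ≤ δ t - c ^ 2 / (4 * γ) * G t ^ 2 := by
    intro t ht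
    obtain ⟨C, hC0, hC⟩ := hgWb t ht
    -- pointwise descent
    have hpt : ∀ ω, ψ (W t ω) + η t * ⟪g (W t ω), v t ω⟫ - γ * η t ^ 2 ≤ ψ (W (t + 1) ω) := by
      intro ω
      have hd := smooth_descent hγ' hgrad hlip (W t ω) (W (t + 1) ω)
      have hy : W (t + 1) ω - W t ω = η t • v t ω := by rw [hWrec t ht ω]; abel
      rw [hy] at hd
      have hni : ⟪g (W t ω), η t • v t ω⟫ = η t * ⟪g (W t ω), v t ω⟫ :=
        real_inner_smul_right _ _ _
      have hns : ‖η t • v t ω‖ ^ 2 = η t ^ 2 := by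
        rw [norm_smul, hvnorm t ht ω, mul_one, Real.norm_eq_abs, sq_abs]
      rw [hni, hns] at hd
      have := (abs_le.mp hd).1
      linarith
    -- integrability of the inner product
    have hvam : AEStronglyMeasurable (v t) μ := ((hvmeas t ht).mono (ℱ.le t)).aestronglyMeasurable
    have hinner_int : Integrable (fun ω => ⟪g (W t ω), v t ω⟫) μ := by
      refine Integrable.mono' (integrable_const C)
        ((hgW_meas t ht).inner hvam) (Filter.Eventually.of_forall fun ω => ?_)
      calc ‖⟪g (W t ω), v t ω⟫‖ ≤ ‖g (W t ω)‖ * ‖v t ω‖ := norm_inner_le_norm _ _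
        _ = ‖g (W t ω)‖ := by rw [hvnorm t ht ω, mul_one]
        _ ≤ C := hC ω
    -- conditional expectation lower bound for the expected inner product
    have hcond : c * G t ≤ ∫ ω, ⟪g (W t ω), v t ω⟫ ∂μ := by
      have hcei : Integrable (μ[v t | ℱ (t - 1)]) μ := integrable_condExp
      have hcesm : AEStronglyMeasurable (μ[v t | ℱ (t - 1)]) μ :=
        (stronglyMeasurable_condExp.mono (ℱ.le _)).aestronglyMeasurable
      have hcondint : Integrable (fun ω => ⟪(μ[v t | ℱ (t - 1)]) ω, g (W t ω)⟫) μ := by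
        refine Integrable.mono' (hcei.norm.const_mul C)
          (hcesm.inner (hgW_meas t ht)) (Filter.Eventually.of_forall fun ω => ?_)
        calc ‖⟪(μ[v t | ℱ (t - 1)]) ω, g (W t ω)⟫‖
            ≤ ‖(μ[v t | ℱ (t - 1)]) ω‖ * ‖g (W t ω)‖ := norm_inner_le_norm _ _
          _ ≤ ‖(μ[v t | ℱ (t - 1)]) ω‖ * C := by
              have := hC ω; nlinarith [norm_nonneg ((μ[v t | ℱ (t - 1)]) ω)]
          _ = C * ‖(μ[v t | ℱ (t - 1)]) ω‖ := mul_comm _ _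
      have h2 : ∫ ω, c * ‖g (W t ω)‖ ∂μ ≤ ∫ ω, ⟪(μ[v t | ℱ (t - 1)]) ω, g (W t ω)⟫ ∂μ :=
        integral_mono_ae ((hgnorm_int t ht).const_mul c) hcondint (halign t ht)
      have h3 : ∫ ω, ⟪(μ[v t | ℱ (t - 1)]) ω, g (W t ω)⟫ ∂μ
          = ∫ ω, ⟪g (W t ω), (μ[v t | ℱ (t - 1)]) ω⟫ ∂μ := by
        simp_rw [real_inner_comm]
      have hYsm : StronglyMeasurable[ℱ (t - 1)] (fun ω => g (W t ω)) :=
        hgc.comp_stronglyMeasurable (hWm t ht)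
      have h4 : ∫ ω, ⟪g (W t ω), (μ[v t | ℱ (t - 1)]) ω⟫ ∂μ
          = ∫ ω, ⟪g (W t ω), v t ω⟫ ∂μ :=
        integral_inner_condexp μ (ℱ.le (t - 1)) hYsm hC hvam (fun ω => le_of_eq (hvnorm t ht ω))
      calc c * G t = ∫ ω, c * ‖g (W t ω)‖ ∂μ := by rw [hG, integral_const_mul]
        _ ≤ ∫ ω, ⟪(μ[v t | ℱ (t - 1)]) ω, g (W t ω)⟫ ∂μ := h2
        _ = ∫ ω, ⟪g (W t ω), (μ[v t | ℱ (t - 1)]) ω⟫ ∂μ := h3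
        _ = ∫ ω, ⟪g (W t ω), v t ω⟫ ∂μ := h4
    -- integrate the pointwise descent inequality
    have hint3 : Integrable (fun ω => η t * ⟪g (W t ω), v t ω⟫) μ :=
      hinner_int.const_mul (η t)
    have hint2 : Integrable (fun ω => ψ (W t ω) + η t * ⟪g (W t ω), v t ω⟫) μ :=
      (hψW_int t ht).add hint3
    have hint1 : Integrable
        (fun ω => ψ (W t ω) + η t * ⟪g (W t ω), v t ω⟫ - γ * η t ^ 2) μ :=
      hint2.sub (integrable_const _)
    have hmono := integral_mono hint1 (hψW_int (t + 1) (by omega)) hpt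
    rw [integral_sub hint2 (integrable_const _), integral_add (hψW_int t ht) hint3,
      integral_const_mul, integral_const, probReal_univ, one_smul] at hmono
    -- combine
    set IP : ℝ := ∫ ω, ⟪g (W t ω), v t ω⟫ ∂μ with hIP
    have h5 : η t * (c * G t) ≤ η t * IP := mul_le_mul_of_nonneg_left hcond (hηnn t ht)
    have hη' : η t = c / (2 * γ) * G t := by rw [hη t ht, ← hG]
    have hcalc : (c / (2 * γ) * G t) * (c * G t) - γ * (c / (2 * γ) * G t) ^ 2
        = c ^ 2 / (4 * γ) * G t ^ 2 := by
      field_simp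
      ring
    have h6 : ∫ ω, ψ (W t ω) ∂μ + c ^ 2 / (4 * γ) * G t ^ 2 ≤ ∫ ω, ψ (W (t + 1) ω) ∂μ := by
      rw [hη'] at h5 hmono
      linarith
    rw [hδ (t + 1), hδ t]
    linarith
  -- recursion in δ
  obtain ⟨α, hα⟩ : ∃ α : ℝ, α = c ^ 2 / (4 * γ * R₀ ^ 2) := ⟨_, rfl⟩
  have hαpos : 0 < α := by rw [hα]; positivity
  have hrec : ∀ t, 1 ≤ t → δ (t + 1) ≤ δ t - α * δ t ^ 2 := by
    intro t ht
    have h1 := hstep t ht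
    have h2 : δ t ^ 2 ≤ (R₀ * G t) ^ 2 := by
      have ha := hδle t ht
      have hb := hδnn t ht
      nlinarith
    have h3 : α * δ t ^ 2 ≤ c ^ 2 / (4 * γ) * G t ^ 2 := by
      have h4 : α * δ t ^ 2 ≤ α * (R₀ * G t) ^ 2 := mul_le_mul_of_nonneg_left h2 hαpos.le
      have h5 : α * (R₀ * G t) ^ 2 = c ^ 2 / (4 * γ) * G t ^ 2 := by
        rw [hα]; field_simp
      linarith
    linarith
  have hmain := selmix_rec_ineq α hαpos δ hδnn hrec
  intro t ht
  have h1 : α * ((t : ℝ) - 1) * δ t ≤ 1 := hmain t (le_of_lt ht)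
  have htpos : (0:ℝ) < (t : ℝ) - 1 := by
    have : (1:ℝ) < (t : ℝ) := by exact_mod_cast ht
    linarith
  have hden : (0:ℝ) < c ^ 2 * ((t : ℝ) - 1) := by positivity
  rw [← hδ t, le_div_iff₀ hden]
  have h2 : c ^ 2 * ((t : ℝ) - 1) * δ t ≤ 4 * γ * R₀ ^ 2 := by
    have h4 : (0:ℝ) < 4 * γ * R₀ ^ 2 := by positivity
    have h5 : c ^ 2 * ((t : ℝ) - 1) * δ t = (α * ((t : ℝ) - 1) * δ t) * (4 * γ * R₀ ^ 2) := by
      rw [hα]; field_simp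
    rw [h5]
    calc (α * ((t : ℝ) - 1) * δ t) * (4 * γ * R₀ ^ 2) ≤ 1 * (4 * γ * R₀ ^ 2) :=
          mul_le_mul_of_nonneg_right h1 h4.le
      _ = 4 * γ * R₀ ^ 2 := one_mul _
  linarith
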